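/- Let L be a symmetric N×N real matrix (N ≥ 2) with L·𝟙_N = 0, and suppose v ∈ ℝ^N is a nonzero vector with Lv = νv for some ν ≠ 0. Write v = (v_a, v_b) with v_a ∈ ℝ the first entry and v_b ∈ ℝ^{N−1}, and set ṽ = v_b − v_a·𝟙_{N−1}. Then ṽ ≠ 0 and L̄ṽ = νṽ, where L̄ = L_{2:N,2:N} − 𝟙_{N−1} L_{1,2:N}. -/
import Mathlib


open Matrix

/-- Let `L` be a symmetric `(m+1) × (m+1)` real matrix (`N = m+1 ≥ 2`) with
`L ⬝ 𝟙 = 0`, and let `v ≠ 0` satisfy `L v = ν v` with `ν ≠ 0`.  Writing `v = (v_a, v_b)` with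
`v_a = v 0 ∈ ℝ` and `v_b = (v 1, …, v m)`, set `ṽ i = v (i+1) − v 0`.  Then `ṽ ≠ 0` and
`L̄ ṽ = ν ṽ`, where `L̄ i j = L (i+1) (j+1) − L 0 (j+1)` is
`L_{2:N,2:N} − 𝟙_{N−1} L_{1,2:N}`. -/
theorem stmt2_eigenvector_reduction (m : ℕ) (hm : 1 ≤ m)
    (L : Matrix (Fin (m + 1)) (Fin (m + 1)) ℝ)
    (hsymm : L.IsSymm)
    (hrow : L.mulVec (fun _ => (1 : ℝ)) = 0)
    (v : Fin (m + 1) → ℝ) (hv : v ≠ 0)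
    (ν : ℝ) (hν : ν ≠ 0)
    (heig : L.mulVec v = ν • v) :
    (fun i : Fin m => v i.succ - v 0) ≠ 0 ∧
      (Matrix.of fun i j : Fin m => L i.succ j.succ - L 0 j.succ).mulVec
          (fun i : Fin m => v i.succ - v 0) =
        ν • (fun i : Fin m => v i.succ - v 0) := by
  have hνv : ∀ k, ∑ j, L k j * v j = ν * v k := by
    intro k
    have := congrFun heig k
    simpa [mulVec, dotProduct] using this
  have hrow' : ∀ k, ∑ j, L k j = 0 := by
    intro k
    have := congrFun hrow k
    simpa [mulVec, dotProduct] using this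
  constructor
  · intro h
    have hconst : ∀ i : Fin m, v i.succ = v 0 := fun i => by
      have := congrFun h i
      simpa [sub_eq_zero] using this
    have hveq : v = fun _ => v 0 := by
      funext k
      refine Fin.cases rfl (fun i => hconst i) k
    have hLv : L.mulVec v = 0 := by
      rw [hveq]
      have h0 : (fun _ : Fin (m+1) => v 0) = (v 0) • (fun _ => (1:ℝ)) := by
        funext k; simp
      rw [h0, mulVec_smul, hrow, smul_zero]
    have hz : ν • v = 0 := by rw [← heig, hLv]
    have hv0 : v = 0 := by
      rcases smul_eq_zero.mp hz with h | h
      · exact absurd h hν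
      · exact h
    exact hv hv0
  · funext i
    simp only [mulVec, dotProduct, of_apply, Pi.smul_apply, smul_eq_mul]
    have h1 := hνv i.succ
    have h2 := hνv 0
    have h3 := hrow' i.succ
    have h4 := hrow' 0
    rw [Fin.sum_univ_succ] at h1 h2 h3 h4
    have hsplit : ∑ j : Fin m, (L i.succ j.succ - L 0 j.succ) * (v j.succ - v 0)
        = (∑ j : Fin m, L i.succ j.succ * v j.succ)
          - (∑ j : Fin m, L i.succ j.succ) * v 0
          - (∑ j : Fin m, L 0 j.succ * v j.succ)
          + (∑ j : Fin m, L 0 j.succ) * v 0 := by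
      rw [Finset.sum_mul, Finset.sum_mul, ← Finset.sum_sub_distrib,
        ← Finset.sum_sub_distrib, ← Finset.sum_add_distrib]
      apply Finset.sum_congr rfl
      intro j _
      ring
    rw [hsplit]
    linear_combination h1 - h2 - v 0 * h3 + v 0 * h4
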